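/- Let p be a prime, X a finite connected undirected graph, and α a Z_p-valued voltage assignment on X; for n ≥ 0 let α_n be α reduced modulo p^n and X_n = X(Z/p^nZ, α_n). Assume there exists an integer m_0 such that for all n ≥ m_0 the number of connected components of X_n equals that of X_{m_0}. Then for every connected component 𝒢_{m_0} of X_{m_0} and every m ≥ m_0 there exists a unique connected subgraph 𝒢_m of X_m such that the sequence 𝒢_{m_0} ← 𝒢_{m_0+1} ← 𝒢_{m_0+2} ← ⋯ (with the maps induced by the natural projections X_{m+1} → X_m) is a Z_p-tower of graph coverings. -/

import Mathlib

/-! # Multigraphs, coverings, voltage assignments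

Directed multigraphs (with loops and multiple edges allowed), undirected multigraphs
(encoded à la Serre, as directed graphs with an edge-inversion), morphisms, coverings,
sheet numbers, deck transformation groups, Galois coverings, voltage assignments and
their derived graphs, connectedness, connected components, directed cycle graphs,
abstract (tectonic) craters and (tectonic) `l`-volcanoes. -/

/-- A directed multigraph. -/
structure Digraph' : Type 1 where
  V : Type
  E : Type
  src : E → V
  tgt : E → V

namespace Digraph'

variable (X : Digraph')

/-- Two vertices are adjacent if some edge goes from the first to the second. -/
def Adj (v w : X.V) : Prop := ∃ e : X.E, X.src e = v ∧ X.tgt e = w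

/-- Two vertices lie in the same connected component (of the underlying
undirected graph). -/
def Reach (v w : X.V) : Prop := Relation.EqvGen X.Adj v w

/-- A graph is connected if any two vertices lie in the same connected component. -/
def Connected : Prop := ∀ v w : X.V, X.Reach v w

/-- The set of vertices of the connected component containing `v`. -/
def ComponentSet (v : X.V) : Set X.V := {w | X.Reach v w}

/-- The number of connected components. -/
noncomputable def NumComponents : ℕ := Nat.card (Quot X.Adj)

/-- The subgraph generated by a set `S` of vertices: its edges are the edges of `X`
having both endpoints in `S`. -/
def induced (S : Set X.V) : Digraph' where
  V := S
  E := {e : X.E // X.src e ∈ S ∧ X.tgt e ∈ S}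
  src e := ⟨X.src e.1, e.2.1⟩
  tgt e := ⟨X.tgt e.1, e.2.2⟩

end Digraph'

/-- A morphism of directed multigraphs. -/
structure DigraphHom (Y X : Digraph') where
  onV : Y.V → X.V
  onE : Y.E → X.E
  map_src : ∀ e, X.src (onE e) = onV (Y.src e)
  map_tgt : ∀ e, X.tgt (onE e) = onV (Y.tgt e)

namespace DigraphHom

/-- The identity morphism. -/
def id (X : Digraph') : DigraphHom X X :=
  ⟨fun v => v, fun e => e, fun _ => rfl, fun _ => rfl⟩

/-- Composition of morphisms of directed multigraphs. -/
def comp {Z Y X : Digraph'} (g : DigraphHom Y X) (f : DigraphHom Z Y) :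
    DigraphHom Z X where
  onV := g.onV ∘ f.onV
  onE := g.onE ∘ f.onE
  map_src e := by simp only [Function.comp_apply, g.map_src, f.map_src]
  map_tgt e := by simp only [Function.comp_apply, g.map_tgt, f.map_tgt]

end DigraphHom

/-- A covering of directed multigraphs: a surjective morphism which is a local
bijection (it restricts to a bijection on the edges emanating from, respectively
arriving at, each given vertex). -/
def IsGraphCovering {Y X : Digraph'} (f : DigraphHom Y X) : Prop :=
  Function.Surjective f.onV ∧
    (∀ v : Y.V, Set.BijOn f.onE {e | Y.src e = v} {e | X.src e = f.onV v}) ∧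
    (∀ v : Y.V, Set.BijOn f.onE {e | Y.tgt e = v} {e | X.tgt e = f.onV v})

/-- A morphism of graphs is `d`-sheeted if every vertex downstairs has exactly `d`
preimages. -/
def IsSheeted {Y X : Digraph'} (f : DigraphHom Y X) (d : ℕ) : Prop :=
  ∀ x : X.V, Nat.card {y : Y.V // f.onV y = x} = d

/-- The group of deck transformations of `f : Y → X`: pairs of permutations of the
vertices and of the edges of `Y` which are compatible with the graph structure and
commute with `f`. -/
def DeckGroup {Y X : Digraph'} (f : DigraphHom Y X) :
    Subgroup (Equiv.Perm Y.V × Equiv.Perm Y.E) where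
  carrier := {σ | (∀ e, Y.src (σ.2 e) = σ.1 (Y.src e)) ∧
    (∀ e, Y.tgt (σ.2 e) = σ.1 (Y.tgt e)) ∧
    (∀ v, f.onV (σ.1 v) = f.onV v) ∧ (∀ e, f.onE (σ.2 e) = f.onE e)}
  one_mem' := ⟨fun _ => rfl, fun _ => rfl, fun _ => rfl, fun _ => rfl⟩
  mul_mem' := by
    rintro σ τ ⟨h1, h2, h3, h4⟩ ⟨g1, g2, g3, g4⟩
    exact ⟨fun e => by simp [Equiv.Perm.mul_apply, h1, g1],
      fun e => by simp [Equiv.Perm.mul_apply, h2, g2],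
      fun v => by simp [Equiv.Perm.mul_apply, h3, g3],
      fun e => by simp [Equiv.Perm.mul_apply, h4, g4]⟩
  inv_mem' := by
    rintro σ ⟨h1, h2, h3, h4⟩
    refine ⟨fun e => ?_, fun e => ?_, fun v => ?_, fun e => ?_⟩
    · have := h1 (σ.2⁻¹ e)
      simp only [Equiv.Perm.coe_inv, Equiv.apply_symm_apply] at this
      simp [Prod.fst_inv, Prod.snd_inv, this]
    · have := h2 (σ.2⁻¹ e)
      simp only [Equiv.Perm.coe_inv, Equiv.apply_symm_apply] at this
      simp [Prod.fst_inv, Prod.snd_inv, this]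
    · have := h3 (σ.1⁻¹ v)
      simp only [Equiv.Perm.coe_inv, Equiv.apply_symm_apply] at this
      simp [Prod.fst_inv, this]
    · have := h4 (σ.2⁻¹ e)
      simp only [Equiv.Perm.coe_inv, Equiv.apply_symm_apply] at this
      simp [Prod.snd_inv, this]

/-- A covering is Galois if it is `d`-sheeted where `d` is the number of its deck
transformations. -/
def IsGaloisCov {Y X : Digraph'} (f : DigraphHom Y X) : Prop :=
  IsGraphCovering f ∧ ∃ d : ℕ, IsSheeted f d ∧ Nat.card ↥(DeckGroup f) = d

/-- An isomorphism of directed multigraphs. -/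
structure DigraphIso (Y X : Digraph') where
  onV : Y.V ≃ X.V
  onE : Y.E ≃ X.E
  map_src : ∀ e, X.src (onE e) = onV (Y.src e)
  map_tgt : ∀ e, X.tgt (onE e) = onV (Y.tgt e)

/-- An undirected multigraph, encoded à la Serre: every undirected edge is recorded
as a pair of mutually inverse directed edges. -/
structure SerreGraph : Type 1 extends Digraph' where
  inv : E → E
  inv_inv : ∀ e, inv (inv e) = e
  src_inv : ∀ e, src (inv e) = tgt e
  tgt_inv : ∀ e, tgt (inv e) = src e

namespace SerreGraph

variable (X : SerreGraph)

/-- The subgraph of an undirected multigraph generated by a set `S` of vertices. -/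
def inducedClosed (S : Set X.V) : SerreGraph where
  V := S
  E := {e : X.E // X.src e ∈ S ∧ X.tgt e ∈ S}
  src e := ⟨X.src e.1, e.2.1⟩
  tgt e := ⟨X.tgt e.1, e.2.2⟩
  inv e := ⟨X.inv e.1, by rw [X.src_inv, X.tgt_inv]; exact ⟨e.2.2, e.2.1⟩⟩
  inv_inv e := Subtype.ext (X.inv_inv e.1)
  src_inv e := Subtype.ext (X.src_inv e.1)
  tgt_inv e := Subtype.ext (X.tgt_inv e.1)

/-- The connected component of a vertex, as an undirected multigraph. -/
def component (v : X.V) : SerreGraph :=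
  X.inducedClosed (X.toDigraph'.ComponentSet v)

end SerreGraph

/-- The undirected multigraph underlying a directed multigraph (the image of the
directed graph under the forgetful map). -/
def Digraph'.toSerre (X : Digraph') : SerreGraph where
  V := X.V
  E := X.E × Bool
  src e := if e.2 then X.src e.1 else X.tgt e.1
  tgt e := if e.2 then X.tgt e.1 else X.src e.1
  inv e := (e.1, !e.2)
  inv_inv e := by cases e with
    | mk a b => cases b <;> rfl
  src_inv e := by cases e with
    | mk a b => cases b <;> rfl
  tgt_inv e := by cases e with
    | mk a b => cases b <;> rfl

/-- A morphism of undirected multigraphs. -/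
structure SerreHom (Y X : SerreGraph) where
  onV : Y.V → X.V
  onE : Y.E → X.E
  map_src : ∀ e, X.src (onE e) = onV (Y.src e)
  map_tgt : ∀ e, X.tgt (onE e) = onV (Y.tgt e)
  map_inv : ∀ e, X.inv (onE e) = onE (Y.inv e)

/-- The underlying morphism of directed multigraphs. -/
def SerreHom.toDigraphHom {Y X : SerreGraph} (f : SerreHom Y X) :
    DigraphHom Y.toDigraph' X.toDigraph' :=
  ⟨f.onV, f.onE, f.map_src, f.map_tgt⟩

/-- An isomorphism of undirected multigraphs. -/
structure SerreIso (Y X : SerreGraph) where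
  onV : Y.V ≃ X.V
  onE : Y.E ≃ X.E
  map_src : ∀ e, X.src (onE e) = onV (Y.src e)
  map_tgt : ∀ e, X.tgt (onE e) = onV (Y.tgt e)
  map_inv : ∀ e, X.inv (onE e) = onE (Y.inv e)

/-- The group of deck transformations of a morphism of undirected multigraphs. -/
def SerreDeckGroup {Y X : SerreGraph} (f : SerreHom Y X) :
    Subgroup (Equiv.Perm Y.V × Equiv.Perm Y.E) where
  carrier := {σ | (∀ e, Y.src (σ.2 e) = σ.1 (Y.src e)) ∧
    (∀ e, Y.tgt (σ.2 e) = σ.1 (Y.tgt e)) ∧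
    (∀ e, Y.inv (σ.2 e) = σ.2 (Y.inv e)) ∧
    (∀ v, f.onV (σ.1 v) = f.onV v) ∧ (∀ e, f.onE (σ.2 e) = f.onE e)}
  one_mem' := ⟨fun _ => rfl, fun _ => rfl, fun _ => rfl, fun _ => rfl, fun _ => rfl⟩
  mul_mem' := by
    rintro σ τ ⟨h1, h2, h3, h4, h5⟩ ⟨g1, g2, g3, g4, g5⟩
    exact ⟨fun e => by simp [Equiv.Perm.mul_apply, h1, g1],
      fun e => by simp [Equiv.Perm.mul_apply, h2, g2],
      fun e => by simp [Equiv.Perm.mul_apply, h3, g3],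
      fun v => by simp [Equiv.Perm.mul_apply, h4, g4],
      fun e => by simp [Equiv.Perm.mul_apply, h5, g5]⟩
  inv_mem' := by
    rintro σ ⟨h1, h2, h3, h4, h5⟩
    refine ⟨fun e => ?_, fun e => ?_, fun e => ?_, fun v => ?_, fun e => ?_⟩
    · have := h1 (σ.2⁻¹ e)
      simp only [Equiv.Perm.coe_inv, Equiv.apply_symm_apply] at this
      simp [Prod.fst_inv, Prod.snd_inv, this]
    · have := h2 (σ.2⁻¹ e)
      simp only [Equiv.Perm.coe_inv, Equiv.apply_symm_apply] at this
      simp [Prod.fst_inv, Prod.snd_inv, this]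
    · have := h3 (σ.2⁻¹ e)
      simp only [Equiv.Perm.coe_inv, Equiv.apply_symm_apply] at this
      simp only [Prod.snd_inv]
      rw [this]
      simp
    · have := h4 (σ.1⁻¹ v)
      simp only [Equiv.Perm.coe_inv, Equiv.apply_symm_apply] at this
      simp [Prod.fst_inv, this]
    · have := h5 (σ.2⁻¹ e)
      simp only [Equiv.Perm.coe_inv, Equiv.apply_symm_apply] at this
      simp [Prod.snd_inv, this]

/-- A morphism of undirected multigraphs is a Galois covering if it is a covering
which is `d`-sheeted, where `d` is the number of its deck transformations. -/
def IsGaloisSerreCov {Y X : SerreGraph} (f : SerreHom Y X) : Prop :=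
  IsGraphCovering f.toDigraphHom ∧
    ∃ d : ℕ, IsSheeted f.toDigraphHom d ∧ Nat.card ↥(SerreDeckGroup f) = d
/-- A voltage assignment on an undirected multigraph, with values in a
(multiplicative) group `G`. -/
structure Voltage (X : SerreGraph) (G : Type) [Group G] where
  fn : X.E → G
  compat : ∀ e, fn (X.inv e) = (fn e)⁻¹

/-- The derived graph of a (multiplicative) voltage assignment. -/
def SerreGraph.derived (X : SerreGraph) (G : Type) [Group G] (α : Voltage X G) :
    SerreGraph where
  V := X.V × G
  E := X.E × G
  src e := (X.src e.1, e.2)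
  tgt e := (X.tgt e.1, e.2 * α.fn e.1)
  inv e := (X.inv e.1, e.2 * α.fn e.1)
  inv_inv e := by
    obtain ⟨a, g⟩ := e
    simp [α.compat, X.inv_inv, mul_assoc]
  src_inv e := by
    obtain ⟨a, g⟩ := e
    simp [X.src_inv]
  tgt_inv e := by
    obtain ⟨a, g⟩ := e
    simp [X.tgt_inv, α.compat, mul_assoc]

/-- A voltage assignment on an undirected multigraph, with values in an additive
group `G`. -/
structure AddVoltage (X : SerreGraph) (G : Type) [AddGroup G] where
  fn : X.E → G
  compat : ∀ e, fn (X.inv e) = -(fn e)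

/-- Post-composition of an additive voltage assignment with a map of additive
groups preserving negation. -/
def AddVoltage.comp {X : SerreGraph} {G H : Type} [AddGroup G] [AddGroup H]
    (α : AddVoltage X G) (f : G → H) (hf : ∀ x, f (-x) = -(f x)) : AddVoltage X H :=
  ⟨fun e => f (α.fn e), fun e => by show f (α.fn (X.inv e)) = -(f (α.fn e)); rw [α.compat, hf]⟩

/-- The derived graph of an additive voltage assignment. -/
def SerreGraph.derivedAdd (X : SerreGraph) (G : Type) [AddGroup G]
    (α : AddVoltage X G) : SerreGraph where
  V := X.V × G
  E := X.E × G
  src e := (X.src e.1, e.2)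
  tgt e := (X.tgt e.1, e.2 + α.fn e.1)
  inv e := (X.inv e.1, e.2 + α.fn e.1)
  inv_inv e := by
    obtain ⟨a, g⟩ := e
    simp [α.compat, X.inv_inv, add_assoc]
  src_inv e := by
    obtain ⟨a, g⟩ := e
    simp [X.src_inv]
  tgt_inv e := by
    obtain ⟨a, g⟩ := e
    simp [X.tgt_inv, α.compat, add_assoc]

/-- The derived graph `X_n = X(ℤ/pⁿℤ, αₙ)` of the reduction `αₙ` modulo `pⁿ` of a
`ℤₚ`-valued voltage assignment `α`. -/
noncomputable def Xlevel (p : ℕ) [Fact p.Prime] (X : SerreGraph)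
    (α : AddVoltage X ℤ_[p]) (n : ℕ) : SerreGraph :=
  X.derivedAdd (ZMod (p ^ n))
    (α.comp (PadicInt.toZModPow n) (fun x => by simp [map_neg]))

/-- The natural projection `X_m → X_n` (for `n ≤ m`) between the derived graphs of
the reductions of a `ℤₚ`-valued voltage assignment, induced by the projection
`ℤ/pᵐℤ → ℤ/pⁿℤ`. -/
noncomputable def levelProj (p : ℕ) [Fact p.Prime] (X : SerreGraph)
    (α : AddVoltage X ℤ_[p]) {n m : ℕ} (h : n ≤ m) :
    SerreHom (Xlevel p X α m) (Xlevel p X α n) where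
  onV v := (v.1, ZMod.castHom (pow_dvd_pow p h) (ZMod (p ^ n)) v.2)
  onE e := (e.1, ZMod.castHom (pow_dvd_pow p h) (ZMod (p ^ n)) e.2)
  map_src e := rfl
  map_tgt e := by
    obtain ⟨a, g⟩ := e
    show (X.tgt a, ZMod.castHom (pow_dvd_pow p h) (ZMod (p ^ n)) g +
        PadicInt.toZModPow n (α.fn a)) =
      (X.tgt a, ZMod.castHom (pow_dvd_pow p h) (ZMod (p ^ n))
        (g + PadicInt.toZModPow m (α.fn a)))
    rw [map_add, ZMod.castHom_apply, ZMod.castHom_apply,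
      PadicInt.cast_toZModPow n m h]
  map_inv e := by
    obtain ⟨a, g⟩ := e
    show (X.inv a, ZMod.castHom (pow_dvd_pow p h) (ZMod (p ^ n)) g +
        PadicInt.toZModPow n (α.fn a)) =
      (X.inv a, ZMod.castHom (pow_dvd_pow p h) (ZMod (p ^ n))
        (g + PadicInt.toZModPow m (α.fn a)))
    rw [map_add, ZMod.castHom_apply, ZMod.castHom_apply,
      PadicInt.cast_toZModPow n m h]


/-! ### Auxiliary machinery -/

section Aux

open Relation

lemma digraphHom_reach {Y X : Digraph'} (f : DigraphHom Y X) {v w : Y.V}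
    (h : Y.Reach v w) : X.Reach (f.onV v) (f.onV w) := by
  induction h with
  | rel a b hab =>
    obtain ⟨e, h1, h2⟩ := hab
    exact .rel _ _ ⟨f.onE e, by rw [f.map_src, h1], by rw [f.map_tgt, h2]⟩
  | refl a => exact .refl _
  | symm a b _ ih => exact .symm _ _ ih
  | trans a b c _ _ ih1 ih2 => exact .trans _ _ _ ih1 ih2

lemma serreHom_reach {Y X : SerreGraph} (f : SerreHom Y X) {v w : Y.V}
    (h : Y.toDigraph'.Reach v w) : X.toDigraph'.Reach (f.onV v) (f.onV w) :=
  digraphHom_reach f.toDigraphHom h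

namespace TowerAux

variable (p : ℕ) [Fact p.Prime] (X : SerreGraph) (α : AddVoltage X ℤ_[p]) (n : ℕ)

/-- Translation by a group element, as a graph morphism of the derived graph. -/
def trMap (t : ZMod (p ^ n)) : SerreHom (Xlevel p X α n) (Xlevel p X α n) where
  onV v := (v.1, v.2 + t)
  onE e := (e.1, e.2 + t)
  map_src _ := rfl
  map_tgt e := by
    show (X.tgt e.1, e.2 + t + _) = (X.tgt e.1, e.2 + _ + t)
    rw [add_right_comm]
  map_inv e := by
    show (X.inv e.1, e.2 + t + _) = (X.inv e.1, e.2 + _ + t)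
    rw [add_right_comm]

lemma reach_translate {t : ZMod (p ^ n)} {v w : (Xlevel p X α n).V}
    (h : (Xlevel p X α n).toDigraph'.Reach v w) :
    (Xlevel p X α n).toDigraph'.Reach (v.1, v.2 + t) (w.1, w.2 + t) :=
  serreHom_reach (trMap p X α n t) h

lemma exists_reach (hconn : X.toDigraph'.Connected) (x y : X.V) :
    ∃ s : ZMod (p ^ n), (Xlevel p X α n).toDigraph'.Reach (x, 0) (y, s) := by
  have h := hconn x y
  induction h with
  | rel a b hab =>
    obtain ⟨e, h1, h2⟩ := hab
    refine ⟨0 + PadicInt.toZModPow n (α.fn e), .rel _ _ ⟨(e, 0), ?_, ?_⟩⟩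
    · show (X.src e, (0 : ZMod (p ^ n))) = (a, 0); rw [h1]
    · exact Prod.ext h2 rfl
  | refl a => exact ⟨0, .refl _⟩
  | symm a b _ ih =>
    obtain ⟨s, hs⟩ := ih
    have h2 := reach_translate p X α n (t := -s) hs
    simp only [add_neg_cancel] at h2
    exact ⟨0 + -s, .symm _ _ h2⟩
  | trans a b c _ _ ih1 ih2 =>
    obtain ⟨s, h1⟩ := ih1
    obtain ⟨u, h2⟩ := ih2
    have h2' := reach_translate p X α n (t := s) h2
    simp only [zero_add] at h2'
    exact ⟨u + s, .trans _ _ _ h1 h2'⟩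

/-- The stabilizer of (the component of) the fiber vertex `(x, 0)`. -/
def stab (x : X.V) : Set (ZMod (p ^ n)) :=
  {t | (Xlevel p X α n).toDigraph'.Reach (x, 0) (x, t)}

lemma stab_zero_mem (x : X.V) : (0 : ZMod (p ^ n)) ∈ stab p X α n x := .refl _

lemma stab_add_mem {x : X.V} {t u : ZMod (p ^ n)} (ht : t ∈ stab p X α n x)
    (hu : u ∈ stab p X α n x) : t + u ∈ stab p X α n x := by
  have h2 := reach_translate p X α n (t := t) hu
  simp only [zero_add] at h2
  exact .trans _ _ _ ht (by rwa [add_comm u t] at h2)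

lemma stab_neg_mem {x : X.V} {t : ZMod (p ^ n)} (ht : t ∈ stab p X α n x) :
    -t ∈ stab p X α n x := by
  have h2 := reach_translate p X α n (t := -t) ht
  simp only [zero_add, add_neg_cancel] at h2
  exact .symm _ _ h2

lemma stab_basepoint (hconn : X.toDigraph'.Connected) (x y : X.V) :
    stab p X α n x ⊆ stab p X α n y := by
  intro t ht
  obtain ⟨s, hs⟩ := exists_reach p X α n hconn y x
  have h1 := reach_translate p X α n (t := s) ht
  simp only [zero_add] at h1
  have h2 := reach_translate p X α n (t := t) hs
  simp only [zero_add] at h2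
  exact .trans _ _ _ hs (.trans _ _ _ h1 (by rw [add_comm s t] at h2; exact .symm _ _ h2))

lemma stab_basepoint_eq (hconn : X.toDigraph'.Connected) (x y : X.V) :
    stab p X α n x = stab p X α n y :=
  Set.Subset.antisymm (stab_basepoint p X α n hconn x y)
    (stab_basepoint p X α n hconn y x)

lemma reach_iff_sub_mem (x : X.V) (g h : ZMod (p ^ n)) :
    (Xlevel p X α n).toDigraph'.Reach (x, g) (x, h) ↔ h - g ∈ stab p X α n x := by
  constructor
  · intro hr
    have h2 := reach_translate p X α n (t := -g) hr
    simp only [add_neg_cancel, ← sub_eq_add_neg] at h2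
    exact h2
  · intro hm
    have h2 := reach_translate p X α n (t := g) hm
    simp only [zero_add, sub_add_cancel] at h2
    exact h2

/-- The stabilizer as an additive subgroup. -/
def stabSub (x : X.V) : AddSubgroup (ZMod (p ^ n)) where
  carrier := stab p X α n x
  zero_mem' := stab_zero_mem p X α n x
  add_mem' := stab_add_mem p X α n
  neg_mem' := stab_neg_mem p X α n

lemma numComponents_eq (hconn : X.toDigraph'.Connected) (x₀ : X.V) :
    (Xlevel p X α n).toDigraph'.NumComponents =
      Nat.card (ZMod (p ^ n) ⧸ stabSub p X α n x₀) := by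
  refine (Nat.card_congr (Equiv.ofBijective ?_ ⟨?_, ?_⟩)).symm
  · exact Quotient.lift (fun g => Quot.mk ((Xlevel p X α n).toDigraph'.Adj) (x₀, g))
      (by
        intro a b hab
        have : -a + b ∈ stabSub p X α n x₀ := QuotientAddGroup.leftRel_apply.mp hab
        rw [neg_add_eq_sub] at this
        exact Quot.eqvGen_sound ((reach_iff_sub_mem p X α n x₀ a b).mpr this))
  · intro qa qb
    refine Quotient.inductionOn₂ qa qb (fun a b hab => ?_)
    have := Quot.eq.mp hab
    exact (QuotientAddGroup.eq).mpr
      (by rw [neg_add_eq_sub]; exact (reach_iff_sub_mem p X α n x₀ a b).mp this)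
  · intro q
    obtain ⟨⟨x, g⟩, rfl⟩ := Quot.exists_rep q
    obtain ⟨s, hs⟩ := exists_reach p X α n hconn x₀ x
    have h2 := reach_translate p X α n (t := g - s) hs
    simp only [zero_add, add_sub_cancel] at h2
    refine ⟨QuotientAddGroup.mk (g - s), ?_⟩
    exact Quot.eqvGen_sound h2

section CastLemmas

variable {p : ℕ} [Fact p.Prime] {m₀ m : ℕ}

lemma ppow_neZero (n : ℕ) : NeZero (p ^ n) :=
  ⟨pow_ne_zero _ (Nat.Prime.ne_zero Fact.out)⟩

/-- A set-theoretic section of the reduction map. -/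
def secZ (s : ZMod (p ^ m₀)) : ZMod (p ^ m) := ((s.val : ℕ) : ZMod (p ^ m))

lemma c_secZ (h : m₀ ≤ m) (s : ZMod (p ^ m₀)) :
    ZMod.castHom (pow_dvd_pow p h) (ZMod (p ^ m₀)) (secZ s) = s := by
  haveI := ppow_neZero (p := p) m₀
  rw [secZ, map_natCast, ZMod.natCast_val, ZMod.cast_id]

/-- Fibers of the reduction map: a preimage is a product. -/
noncomputable def preimEquiv (h : m₀ ≤ m) (T : Set (ZMod (p ^ m₀))) :
    ((ZMod.castHom (pow_dvd_pow p h) (ZMod (p ^ m₀))) ⁻¹' T) ≃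
      T × {t : ZMod (p ^ m) //
        ZMod.castHom (pow_dvd_pow p h) (ZMod (p ^ m₀)) t = 0} where
  toFun x := (⟨_, x.2⟩,
    ⟨x.1 - secZ (ZMod.castHom (pow_dvd_pow p h) (ZMod (p ^ m₀)) x.1),
      by rw [map_sub, c_secZ h, sub_self]⟩)
  invFun st := ⟨secZ st.1.1 + st.2.1, by
    show ZMod.castHom (pow_dvd_pow p h) (ZMod (p ^ m₀)) _ ∈ T
    rw [map_add, c_secZ h, st.2.2, add_zero]; exact st.1.2⟩
  left_inv x := by
    apply Subtype.ext
    show secZ _ + (x.1 - secZ _) = x.1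
    ring
  right_inv st := by
    have hc : ZMod.castHom (pow_dvd_pow p h) (ZMod (p ^ m₀))
        (secZ st.1.1 + st.2.1) = st.1.1 := by
      rw [map_add, c_secZ h, st.2.2, add_zero]
    refine Prod.ext (Subtype.ext ?_) (Subtype.ext ?_)
    · exact hc
    · show secZ st.1.1 + st.2.1 - secZ _ = st.2.1
      rw [hc]; ring

lemma card_preimage (h : m₀ ≤ m) (T : Set (ZMod (p ^ m₀))) :
    Nat.card ((ZMod.castHom (pow_dvd_pow p h) (ZMod (p ^ m₀))) ⁻¹' T) =
      Nat.card T * Nat.card {t : ZMod (p ^ m) //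
        ZMod.castHom (pow_dvd_pow p h) (ZMod (p ^ m₀)) t = 0} := by
  rw [Nat.card_congr (preimEquiv h T), Nat.card_prod]

/-- The injection `ℤ/p^(m-m₀) → ℤ/p^m` given by multiplication by `p^m₀`. -/
noncomputable def nuHom (h : m₀ ≤ m) : ZMod (p ^ (m - m₀)) →+ ZMod (p ^ m) :=
  ZMod.lift _ ⟨(AddMonoidHom.mulLeft ((p : ZMod (p ^ m)) ^ m₀)).comp
      (Int.castAddHom _), by
    show ((p : ZMod (p ^ m)) ^ m₀) * (((p ^ (m - m₀) : ℕ) : ℤ) : ZMod (p ^ m)) = 0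
    push_cast
    rw [← pow_add, Nat.add_sub_cancel' h, ← Nat.cast_pow, ZMod.natCast_self]⟩

lemma nuHom_coe (h : m₀ ≤ m) (j : ℤ) :
    nuHom h ((j : ℤ) : ZMod (p ^ (m - m₀))) =
      ((p : ZMod (p ^ m)) ^ m₀) * ((j : ℤ) : ZMod (p ^ m)) := by
  rw [nuHom, ZMod.lift_coe]
  rfl

lemma nu_spec (h : m₀ ≤ m) (a : ZMod (p ^ (m - m₀))) :
    nuHom h a = ((p : ZMod (p ^ m)) ^ m₀) * ((a.val : ℕ) : ZMod (p ^ m)) := by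
  haveI := ppow_neZero (p := p) (m - m₀)
  have ha : (((a.val : ℕ) : ℤ) : ZMod (p ^ (m - m₀))) = a := by
    push_cast
    rw [ZMod.natCast_val, ZMod.cast_id]
  have h2 := nuHom_coe (p := p) h (a.val : ℤ)
  rw [ha] at h2
  rw [h2]
  push_cast
  rfl

lemma c_nu (h : m₀ ≤ m) (a : ZMod (p ^ (m - m₀))) :
    ZMod.castHom (pow_dvd_pow p h) (ZMod (p ^ m₀)) (nuHom h a) = 0 := by
  rw [nu_spec h, map_mul, map_pow, map_natCast, map_natCast,
    ← Nat.cast_pow, ZMod.natCast_self, zero_mul]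

lemma nu_inj (h : m₀ ≤ m) : Function.Injective (nuHom (p := p) h) := by
  haveI := ppow_neZero (p := p) (m - m₀)
  haveI := ppow_neZero (p := p) m
  rw [injective_iff_map_eq_zero]
  intro a ha
  rw [nu_spec h, ← Nat.cast_pow, ← Nat.cast_mul] at ha
  have hdvd : p ^ m ∣ p ^ m₀ * a.val :=
    (ZMod.natCast_eq_zero_iff _ _).mp ha
  have hdvd' : p ^ m₀ * p ^ (m - m₀) ∣ p ^ m₀ * a.val := by
    rw [← pow_add, Nat.add_sub_cancel' h]; exact hdvd
  have hp0 : 0 < p ^ m₀ := pow_pos (Nat.Prime.pos Fact.out) m₀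
  have hdvd2 : p ^ (m - m₀) ∣ a.val := (Nat.mul_dvd_mul_iff_left hp0).mp hdvd'
  have h0 := Nat.eq_zero_of_dvd_of_lt hdvd2 (ZMod.val_lt a)
  exact (ZMod.val_eq_zero a).mp h0

lemma nu_surj (h : m₀ ≤ m) (t : ZMod (p ^ m))
    (ht : ZMod.castHom (pow_dvd_pow p h) (ZMod (p ^ m₀)) t = 0) :
    ∃ a, nuHom h a = t := by
  haveI := ppow_neZero (p := p) m
  haveI := ppow_neZero (p := p) m₀
  have h1 : ((t.val : ℕ) : ZMod (p ^ m₀)) = 0 := by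
    have h2 : ((t.val : ℕ) : ZMod (p ^ m)) = t := by
      rw [ZMod.natCast_val, ZMod.cast_id]
    rw [← h2, map_natCast] at ht
    exact ht
  obtain ⟨j, hj⟩ := (ZMod.natCast_eq_zero_iff _ _).mp h1
  refine ⟨(((j : ℕ) : ℤ) : ZMod (p ^ (m - m₀))), ?_⟩
  rw [nuHom_coe h]
  push_cast
  rw [← Nat.cast_pow, ← Nat.cast_mul, ← hj, ZMod.natCast_val, ZMod.cast_id]

/-- The kernel of the reduction map is in bijection with `ℤ/p^(m-m₀)`. -/
noncomputable def kerEquiv (h : m₀ ≤ m) :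
    ZMod (p ^ (m - m₀)) ≃ {t : ZMod (p ^ m) //
      ZMod.castHom (pow_dvd_pow p h) (ZMod (p ^ m₀)) t = 0} :=
  Equiv.ofBijective (fun a => ⟨nuHom h a, c_nu h a⟩)
    ⟨fun a b hab => nu_inj h (congrArg Subtype.val hab),
      fun t => (nu_surj h t.1 t.2).imp (fun _ ha => Subtype.ext ha)⟩

lemma card_ker (h : m₀ ≤ m) :
    Nat.card {t : ZMod (p ^ m) //
      ZMod.castHom (pow_dvd_pow p h) (ZMod (p ^ m₀)) t = 0} = p ^ (m - m₀) := by
  rw [← Nat.card_congr (kerEquiv h), Nat.card_zmod]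

end CastLemmas

section GraphSide

/-- A connected component, as an induced subgraph, is connected. -/
lemma inducedClosed_connected (Y : SerreGraph) (w₀ : Y.V) :
    (Y.inducedClosed (Y.toDigraph'.ComponentSet w₀)).toDigraph'.Connected := by
  have step : ∀ a b : Y.V, Y.toDigraph'.Reach a b →
      ((Y.toDigraph'.Reach w₀ a ↔ Y.toDigraph'.Reach w₀ b) ∧
        ∀ (ha : a ∈ Y.toDigraph'.ComponentSet w₀)
          (hb : b ∈ Y.toDigraph'.ComponentSet w₀),
          (Y.inducedClosed (Y.toDigraph'.ComponentSet w₀)).toDigraph'.Reach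
            ⟨a, ha⟩ ⟨b, hb⟩) := by
    intro a b hr
    induction hr with
    | rel a b hab =>
      obtain ⟨e, h1, h2⟩ := hab
      refine ⟨⟨fun ha => .trans _ _ _ ha (.rel _ _ ⟨e, h1, h2⟩),
        fun hb => .trans _ _ _ hb (.rel _ _ ⟨Y.inv e, by rw [Y.src_inv, h2],
          by rw [Y.tgt_inv, h1]⟩)⟩, ?_⟩
      intro ha hb
      refine .rel _ _ ⟨⟨e, ⟨?_, ?_⟩⟩, Subtype.ext h1, Subtype.ext h2⟩
      · rw [h1]; exact ha
      · rw [h2]; exact hb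
    | refl a => exact ⟨Iff.rfl, fun ha hb => .refl _⟩
    | symm a b _ ih => exact ⟨ih.1.symm, fun hb ha => .symm _ _ (ih.2 ha hb)⟩
    | trans a b c _ _ ih1 ih2 =>
      exact ⟨ih1.1.trans ih2.1,
        fun ha hc => .trans _ _ _ (ih1.2 ha (ih1.1.mp ha)) (ih2.2 _ hc)⟩
  intro v w
  obtain ⟨a, ha⟩ := v
  obtain ⟨b, hb⟩ := w
  exact (step a b (.trans _ _ _ (.symm _ _ ha) hb)).2 ha hb

/-- Rigidity: two deck transformations of a covering of graphs with connected
total space agreeing at one vertex are equal. -/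
lemma deck_rigid {Y Xc : SerreGraph} (f : SerreHom Y Xc)
    (hcov : IsGraphCovering f.toDigraphHom) (hYconn : Y.toDigraph'.Connected)
    {σ τ : Equiv.Perm Y.V × Equiv.Perm Y.E}
    (hσ : σ ∈ SerreDeckGroup f) (hτ : τ ∈ SerreDeckGroup f) (v₀ : Y.V)
    (hv₀ : σ.1 v₀ = τ.1 v₀) : σ = τ := by
  obtain ⟨hs1, ht1, hi1, hf1, he1⟩ := hσ
  obtain ⟨hs2, ht2, hi2, hf2, he2⟩ := hτ
  have hedge : ∀ (a : Y.V) (e : Y.E), Y.src e = a → σ.1 a = τ.1 a →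
      σ.2 e = τ.2 e := by
    intro a e h1 hab
    have inj := (hcov.2.1 (σ.1 a)).2.1
    refine inj ?_ ?_ ?_
    · show Y.src (σ.2 e) = σ.1 a
      rw [hs1, h1]
    · show Y.src (τ.2 e) = σ.1 a
      rw [hs2, h1]; exact hab.symm
    · show f.onE (σ.2 e) = f.onE (τ.2 e)
      rw [he1, he2]
  have hstep : ∀ a b : Y.V, Y.toDigraph'.Adj a b → σ.1 a = τ.1 a →
      σ.1 b = τ.1 b := by
    rintro a b ⟨e, h1, h2⟩ hab
    have he := hedge a e h1 hab
    rw [← h2, ← ht1, he, ht2]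
  have hagree : ∀ b, σ.1 b = τ.1 b := by
    intro b
    have key : ∀ a b : Y.V, Y.toDigraph'.Reach a b →
        (σ.1 a = τ.1 a ↔ σ.1 b = τ.1 b) := by
      intro a b hr
      induction hr with
      | rel a b hab =>
        obtain ⟨e, h1, h2⟩ := hab
        exact ⟨hstep a b ⟨e, h1, h2⟩, hstep b a ⟨Y.inv e,
          by rw [Y.src_inv, h2], by rw [Y.tgt_inv, h1]⟩⟩
      | refl a => exact Iff.rfl
      | symm _ _ _ ih => exact ih.symm
      | trans _ _ _ _ _ ih1 ih2 => exact ih1.trans ih2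
    exact (key v₀ b (hYconn v₀ b)).mp hv₀
  have hedges : ∀ e, σ.2 e = τ.2 e := fun e => hedge (Y.src e) e rfl (hagree _)
  exact Prod.ext (Equiv.ext hagree) (Equiv.ext hedges)

variable (p : ℕ) [Fact p.Prime] (X : SerreGraph) (α : AddVoltage X ℤ_[p])

/-- The morphism between induced subgraphs induced by the level projection. -/
noncomputable def indHom {m₀ m : ℕ} (h : m₀ ≤ m) (S : Set (Xlevel p X α m).V)
    (T : Set (Xlevel p X α m₀).V)
    (hV : ∀ v ∈ S, (levelProj p X α h).onV v ∈ T) :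
    SerreHom ((Xlevel p X α m).inducedClosed S)
      ((Xlevel p X α m₀).inducedClosed T) where
  onV v := ⟨(levelProj p X α h).onV v.1, hV _ v.2⟩
  onE e := ⟨(levelProj p X α h).onE e.1,
    by rw [(levelProj p X α h).map_src]; exact hV _ e.2.1,
    by rw [(levelProj p X α h).map_tgt]; exact hV _ e.2.2⟩
  map_src e := Subtype.ext ((levelProj p X α h).map_src e.1)
  map_tgt e := Subtype.ext ((levelProj p X α h).map_tgt e.1)
  map_inv e := Subtype.ext ((levelProj p X α h).map_inv e.1)

lemma tgt_translate {m : ℕ} (a : X.E) (g t : ZMod (p ^ m)) :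
    (Xlevel p X α m).tgt (a, g + t) =
      (((Xlevel p X α m).tgt (a, g)).1, ((Xlevel p X α m).tgt (a, g)).2 + t) := by
  show (X.tgt a, g + t + _) = (X.tgt a, g + _ + t)
  rw [add_right_comm]

lemma tgt_eq {m : ℕ} (b : X.E) (g : ZMod (p ^ m)) :
    (Xlevel p X α m).tgt (b, g) =
      (X.tgt b, g + (PadicInt.toZModPow m) (α.fn b)) := rfl

lemma c_beta {m₀ m : ℕ} (h : m₀ ≤ m) (x : ℤ_[p]) :
    ZMod.castHom (pow_dvd_pow p h) (ZMod (p ^ m₀)) ((PadicInt.toZModPow m) x) =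
      (PadicInt.toZModPow m₀) x := by
  rw [ZMod.castHom_apply, PadicInt.cast_toZModPow m₀ m h]

/-- Translation by an element stabilizing `S`, as a pair of permutations of the
induced subgraph on `S`. -/
def deckPair {m : ℕ} (S : Set (Xlevel p X α m).V) (t : ZMod (p ^ m))
    (hSt : ∀ v ∈ S, ((v.1, v.2 + t) : (Xlevel p X α m).V) ∈ S)
    (hSt' : ∀ v ∈ S, ((v.1, v.2 + -t) : (Xlevel p X α m).V) ∈ S) :
    Equiv.Perm ((Xlevel p X α m).inducedClosed S).V ×
      Equiv.Perm ((Xlevel p X α m).inducedClosed S).E where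
  fst :=
    { toFun := fun v => ⟨(v.1.1, v.1.2 + t), hSt _ v.2⟩
      invFun := fun v => ⟨(v.1.1, v.1.2 + -t), hSt' _ v.2⟩
      left_inv := fun v => Subtype.ext (Prod.ext rfl (by ring))
      right_inv := fun v => Subtype.ext (Prod.ext rfl (by ring)) }
  snd :=
    { toFun := fun e => ⟨(e.1.1, e.1.2 + t), hSt _ e.2.1,
        by rw [tgt_translate]; exact hSt _ e.2.2⟩
      invFun := fun e => ⟨(e.1.1, e.1.2 + -t), hSt' _ e.2.1,
        by rw [tgt_translate]; exact hSt' _ e.2.2⟩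
      left_inv := fun e => Subtype.ext (Prod.ext rfl (by ring))
      right_inv := fun e => Subtype.ext (Prod.ext rfl (by ring)) }

lemma deckPair_mem {m₀ m : ℕ} (h : m₀ ≤ m) (S : Set (Xlevel p X α m).V)
    (T : Set (Xlevel p X α m₀).V)
    (hV : ∀ v ∈ S, (levelProj p X α h).onV v ∈ T) (t : ZMod (p ^ m))
    (ht : ZMod.castHom (pow_dvd_pow p h) (ZMod (p ^ m₀)) t = 0)
    (hSt : ∀ v ∈ S, ((v.1, v.2 + t) : (Xlevel p X α m).V) ∈ S)
    (hSt' : ∀ v ∈ S, ((v.1, v.2 + -t) : (Xlevel p X α m).V) ∈ S) :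
    deckPair p X α S t hSt hSt' ∈ SerreDeckGroup (indHom p X α h S T hV) := by
  refine ⟨fun e => Subtype.ext rfl,
    fun e => Subtype.ext (Prod.ext rfl (add_right_comm _ _ _)),
    fun e => Subtype.ext (Prod.ext rfl (add_right_comm _ _ _)),
    fun v => Subtype.ext (Prod.ext rfl (by
      show ZMod.castHom (pow_dvd_pow p h) (ZMod (p ^ m₀)) (_ + t) = _
      rw [map_add, ht, add_zero]; rfl)),
    fun e => Subtype.ext (Prod.ext rfl (by
      show ZMod.castHom (pow_dvd_pow p h) (ZMod (p ^ m₀)) (_ + t) = _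
      rw [map_add, ht, add_zero]; rfl))⟩

end GraphSide

end TowerAux

end Aux

/-- **Corollary (towers over a connected component, eventually constant number of
components).**
Let `p` be a prime, `X` a finite connected undirected graph, and `α` a `ℤₚ`-valued
voltage assignment on `X`; for `n ≥ 0` let `αₙ` be `α` reduced modulo `pⁿ` and
`Xₙ = X(ℤ/pⁿℤ, αₙ)`.  Assume there exists `m₀` such that for all `n ≥ m₀` the number
of connected components of `Xₙ` equals that of `X_{m₀}`.  Then for every connected
component `𝒢_{m₀}` of `X_{m₀}` (the component of a vertex `z`) and every `m ≥ m₀`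
there exists a unique connected component `S` of `Xₘ` which projects into `𝒢_{m₀}`
and for which the induced map of graphs is a Galois covering with Galois group
isomorphic to `ℤ/p^{m-m₀}ℤ`; in particular the graphs so obtained form a `ℤₚ`-tower
over `𝒢_{m₀}`. -/
theorem unique_component_tower_over_component
    (p : ℕ) [Fact p.Prime] (X : SerreGraph) (hV : Finite X.V) (hE : Finite X.E)
    (hconn : X.toDigraph'.Connected) (α : AddVoltage X ℤ_[p]) (m₀ : ℕ)
    (hcomp : ∀ n : ℕ, m₀ ≤ n →
      (Xlevel p X α n).toDigraph'.NumComponents =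
        (Xlevel p X α m₀).toDigraph'.NumComponents)
    (z : (Xlevel p X α m₀).V) :
    ∀ m : ℕ, ∀ h : m₀ ≤ m,
      ∃! S : Set (Xlevel p X α m).V,
        (∃ w, S = (Xlevel p X α m).toDigraph'.ComponentSet w) ∧
        ((levelProj p X α h).onV '' S ⊆
          (Xlevel p X α m₀).toDigraph'.ComponentSet z) ∧
        ∃ f : SerreHom ((Xlevel p X α m).inducedClosed S)
            ((Xlevel p X α m₀).component z),
          (∀ w, (f.onV w).1 = (levelProj p X α h).onV w.1) ∧
          (∀ e, (f.onE e).1 = (levelProj p X α h).onE e.1) ∧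
          IsGraphCovering f.toDigraphHom ∧
          IsSheeted f.toDigraphHom (p ^ (m - m₀)) ∧
          Nat.card ↥(SerreDeckGroup f) = p ^ (m - m₀) ∧
          Nonempty (↥(SerreDeckGroup f) ≃* Multiplicative (ZMod (p ^ (m - m₀)))) := by
  intro m hm
  haveI : Finite X.V := hV
  haveI := TowerAux.ppow_neZero (p := p) m
  haveI := TowerAux.ppow_neZero (p := p) m₀
  haveI := TowerAux.ppow_neZero (p := p) (m - m₀)
  -- stabilizer compatibility with the projection
  have hsub : TowerAux.stab p X α m z.1 ⊆
      (ZMod.castHom (pow_dvd_pow p hm) (ZMod (p ^ m₀))) ⁻¹'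
        (TowerAux.stab p X α m₀ z.1) := by
    intro t ht
    have h0 := serreHom_reach (levelProj p X α hm) ht
    have hz0 : (levelProj p X α hm).onV ((z.1, 0) : (Xlevel p X α m).V) =
        ((z.1, 0) : (Xlevel p X α m₀).V) := Prod.ext rfl (map_zero _)
    rw [hz0] at h0
    exact h0
  -- counting
  have hcard_m := AddSubgroup.card_eq_card_quotient_mul_card_addSubgroup
      (TowerAux.stabSub p X α m z.1)
  have hcard_0 := AddSubgroup.card_eq_card_quotient_mul_card_addSubgroup
      (TowerAux.stabSub p X α m₀ z.1)
  rw [Nat.card_zmod] at hcard_m hcard_0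
  have hQ : Nat.card (ZMod (p ^ m) ⧸ TowerAux.stabSub p X α m z.1) =
      Nat.card (ZMod (p ^ m₀) ⧸ TowerAux.stabSub p X α m₀ z.1) := by
    have h1 := TowerAux.numComponents_eq p X α m hconn z.1
    have h2 := TowerAux.numComponents_eq p X α m₀ hconn z.1
    rw [← h1, ← h2]
    exact hcomp m hm
  have hQpos : 0 < Nat.card (ZMod (p ^ m₀) ⧸ TowerAux.stabSub p X α m₀ z.1) := by
    rcases Nat.eq_zero_or_pos
        (Nat.card (ZMod (p ^ m₀) ⧸ TowerAux.stabSub p X α m₀ z.1)) with h0 | h0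
    · rw [h0, zero_mul] at hcard_0
      exact absurd hcard_0 (pow_ne_zero m₀ (Nat.Prime.ne_zero Fact.out))
    · exact h0
  have hsm : Nat.card ↥(TowerAux.stabSub p X α m z.1) =
      Nat.card ↥(TowerAux.stabSub p X α m₀ z.1) * p ^ (m - m₀) := by
    have h3 : p ^ m = p ^ m₀ * p ^ (m - m₀) := by
      rw [← pow_add, Nat.add_sub_cancel' hm]
    have hcm2 := hcard_m.trans (congrArg
      (fun q => q * Nat.card ↥(TowerAux.stabSub p X α m z.1)) hQ)
    have harith : Nat.card (ZMod (p ^ m₀) ⧸ TowerAux.stabSub p X α m₀ z.1) *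
        (Nat.card ↥(TowerAux.stabSub p X α m₀ z.1) * p ^ (m - m₀)) =
        Nat.card (ZMod (p ^ m₀) ⧸ TowerAux.stabSub p X α m₀ z.1) *
          Nat.card ↥(TowerAux.stabSub p X α m z.1) := by
      rw [← mul_assoc, ← hcard_0, ← h3]
      exact hcm2
    exact (Nat.eq_of_mul_eq_mul_left hQpos harith).symm
  have hstab_eq : TowerAux.stab p X α m z.1 =
      (ZMod.castHom (pow_dvd_pow p hm) (ZMod (p ^ m₀))) ⁻¹'
        (TowerAux.stab p X α m₀ z.1) := by
    apply Set.eq_of_subset_of_ncard_le hsub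
    rw [← Nat.card_coe_set_eq, ← Nat.card_coe_set_eq,
      TowerAux.card_preimage hm, TowerAux.card_ker hm]
    apply le_of_eq
    have e0 : Nat.card ↥(TowerAux.stab p X α m₀ z.1) =
        Nat.card ↥(TowerAux.stabSub p X α m₀ z.1) :=
      Nat.card_congr (Equiv.subtypeEquivRight (fun x => Iff.rfl))
    have em : Nat.card ↥(TowerAux.stab p X α m z.1) =
        Nat.card ↥(TowerAux.stabSub p X α m z.1) :=
      Nat.card_congr (Equiv.subtypeEquivRight (fun x => Iff.rfl))
    rw [e0, em, hsm]
  -- key consequences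
  have key1 : ∀ t : ZMod (p ^ m),
      ZMod.castHom (pow_dvd_pow p hm) (ZMod (p ^ m₀)) t = 0 →
      ∀ (x : X.V) (g : ZMod (p ^ m)),
        (Xlevel p X α m).toDigraph'.Reach (x, g) (x, g + t) := by
    intro t ht x g
    have h1 : t ∈ TowerAux.stab p X α m z.1 := by
      rw [hstab_eq]
      refine Set.mem_preimage.mpr ?_
      rw [ht]
      exact TowerAux.stab_zero_mem p X α m₀ z.1
    have h2 : t ∈ TowerAux.stab p X α m x :=
      TowerAux.stab_basepoint p X α m hconn z.1 x h1
    exact (TowerAux.reach_iff_sub_mem p X α m x g (g + t)).mpr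
      (by rwa [add_sub_cancel_left])
  have key2 : ∀ s ∈ TowerAux.stab p X α m₀ z.1,
      ∃ u ∈ TowerAux.stab p X α m z.1,
        ZMod.castHom (pow_dvd_pow p hm) (ZMod (p ^ m₀)) u = s := by
    intro s hs
    refine ⟨TowerAux.secZ s, ?_, TowerAux.c_secZ hm s⟩
    rw [hstab_eq]
    refine Set.mem_preimage.mpr ?_
    rw [TowerAux.c_secZ hm s]
    exact hs
  -- base point upstairs
  have hzl : ZMod.castHom (pow_dvd_pow p hm) (ZMod (p ^ m₀))
      (TowerAux.secZ (m := m) z.2) = z.2 := TowerAux.c_secZ hm z.2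
  have hπw₀ : (levelProj p X α hm).onV
      ((z.1, TowerAux.secZ (m := m) z.2) : (Xlevel p X α m).V) = z :=
    Prod.ext rfl hzl
  have hproj : ∀ v ∈ (Xlevel p X α m).toDigraph'.ComponentSet
      ((z.1, TowerAux.secZ (m := m) z.2) : (Xlevel p X α m).V),
      (levelProj p X α hm).onV v ∈
        (Xlevel p X α m₀).toDigraph'.ComponentSet z := by
    intro v hv
    have h1 := serreHom_reach (levelProj p X α hm) hv
    rwa [hπw₀] at h1
  -- surjectivity of the projection onto the component of z
  have hsurjV : ∀ (y : X.V) (hbar : ZMod (p ^ m₀)),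
      (Xlevel p X α m₀).toDigraph'.Reach z (y, hbar) →
      ∃ g : ZMod (p ^ m),
        ZMod.castHom (pow_dvd_pow p hm) (ZMod (p ^ m₀)) g = hbar ∧
        (Xlevel p X α m).toDigraph'.Reach
          ((z.1, TowerAux.secZ (m := m) z.2)) ((y, g)) := by
    intro y hbar hz'
    obtain ⟨s, hs⟩ := TowerAux.exists_reach p X α m hconn z.1 y
    have hs' := TowerAux.reach_translate p X α m (t := TowerAux.secZ (m := m) z.2) hs
    simp only [zero_add] at hs'
    have hproj1 := serreHom_reach (levelProj p X α hm) hs'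
    rw [hπw₀] at hproj1
    have hmem : hbar - ZMod.castHom (pow_dvd_pow p hm) (ZMod (p ^ m₀))
        (s + TowerAux.secZ (m := m) z.2) ∈ TowerAux.stab p X α m₀ y :=
      (TowerAux.reach_iff_sub_mem p X α m₀ y _ hbar).mp
        (.trans _ _ _ (.symm _ _ hproj1) hz')
    have hmem' := TowerAux.stab_basepoint p X α m₀ hconn y z.1 hmem
    obtain ⟨u, hu, hcu⟩ := key2 _ hmem'
    refine ⟨s + TowerAux.secZ (m := m) z.2 + u, ?_, ?_⟩
    · rw [map_add, hcu]; ring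
    · have hu2 : u ∈ TowerAux.stab p X α m y :=
        TowerAux.stab_basepoint p X α m hconn z.1 y hu
      have h3 : (Xlevel p X α m).toDigraph'.Reach
          (y, s + TowerAux.secZ (m := m) z.2)
          (y, s + TowerAux.secZ (m := m) z.2 + u) :=
        (TowerAux.reach_iff_sub_mem p X α m y _ _).mpr
          (by rwa [add_sub_cancel_left])
      exact .trans _ _ _ hs' h3
  -- the covering property
  have hcov : IsGraphCovering
      (TowerAux.indHom p X α hm _ _ hproj).toDigraphHom := by
    refine ⟨?_, ?_, ?_⟩
    · rintro ⟨⟨y, hbar⟩, hmem⟩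
      obtain ⟨g, hcg, hg⟩ := hsurjV y hbar hmem
      exact ⟨⟨(y, g), hg⟩, Subtype.ext (Prod.ext rfl hcg)⟩
    · intro v
      refine ⟨?_, ?_, ?_⟩
      · intro e he
        have he' : ((Xlevel p X α m).inducedClosed _).src e = v := he
        have h9 := (TowerAux.indHom p X α hm _ _ hproj).toDigraphHom.map_src e
        rw [he'] at h9
        exact h9
      · rintro ⟨⟨a1, g1⟩, he1⟩ h1 ⟨⟨a2, g2⟩, he2⟩ h2 heq
        have h1' : ((X.src a1, g1) : (Xlevel p X α m).V) = v.1 :=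
          congrArg Subtype.val h1
        have h2' : ((X.src a2, g2) : (Xlevel p X α m).V) = v.1 :=
          congrArg Subtype.val h2
        have ha : a1 = a2 :=
          congrArg (fun q : ((Xlevel p X α m₀).inducedClosed _).E => q.1.1) heq
        have hg : g1 = g2 :=
          (congrArg Prod.snd h1').trans (congrArg Prod.snd h2').symm
        exact Subtype.ext (Prod.ext ha hg)
      · rintro ⟨⟨b, h'⟩, hbmem⟩ hEb1
        have hEb2 : ((X.src b, h') : (Xlevel p X α m₀).V) =
            (v.1.1, ZMod.castHom (pow_dvd_pow p hm) (ZMod (p ^ m₀)) v.1.2) :=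
          congrArg Subtype.val hEb1
        have hsb : X.src b = v.1.1 := congrArg Prod.fst hEb2
        have hh' : h' = ZMod.castHom (pow_dvd_pow p hm) (ZMod (p ^ m₀)) v.1.2 :=
          congrArg Prod.snd hEb2
        have hsrcv : ((X.src b, v.1.2) : (Xlevel p X α m).V) = v.1 :=
          Prod.ext hsb rfl
        have hsrcS : ((X.src b, v.1.2) : (Xlevel p X α m).V) ∈
            (Xlevel p X α m).toDigraph'.ComponentSet
              ((z.1, TowerAux.secZ (m := m) z.2)) := by
          rw [hsrcv]; exact v.2
        have htgtS : (Xlevel p X α m).tgt ((b, v.1.2)) ∈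
            (Xlevel p X α m).toDigraph'.ComponentSet
              ((z.1, TowerAux.secZ (m := m) z.2)) :=
          Relation.EqvGen.trans _ _ _ v.2
            (.rel _ _ ⟨(b, v.1.2), hsrcv, rfl⟩)
        exact ⟨⟨(b, v.1.2), hsrcS, htgtS⟩, Subtype.ext hsrcv,
          Subtype.ext (Prod.ext rfl hh'.symm)⟩
    · intro v
      refine ⟨?_, ?_, ?_⟩
      · intro e he
        have he' : ((Xlevel p X α m).inducedClosed _).tgt e = v := he
        have h9 := (TowerAux.indHom p X α hm _ _ hproj).toDigraphHom.map_tgt e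
        rw [he'] at h9
        exact h9
      · rintro ⟨⟨a1, g1⟩, he1⟩ h1 ⟨⟨a2, g2⟩, he2⟩ h2 heq
        have h1' : (Xlevel p X α m).tgt (a1, g1) = v.1 := congrArg Subtype.val h1
        have h2' : (Xlevel p X α m).tgt (a2, g2) = v.1 := congrArg Subtype.val h2
        have ha : a1 = a2 :=
          congrArg (fun q : ((Xlevel p X α m₀).inducedClosed _).E => q.1.1) heq
        subst ha
        have hg : g1 = g2 := by
          rw [TowerAux.tgt_eq] at h1' h2'
          have e1 : g1 + (PadicInt.toZModPow m) (α.fn a1) =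
              g2 + (PadicInt.toZModPow m) (α.fn a1) :=
            (congrArg Prod.snd h1').trans (congrArg Prod.snd h2').symm
          exact add_right_cancel e1
        exact Subtype.ext (Prod.ext rfl hg)
      · rintro ⟨⟨b, h'⟩, hbmem⟩ hEb1
        have hEb2 : (Xlevel p X α m₀).tgt (b, h') =
            (v.1.1, ZMod.castHom (pow_dvd_pow p hm) (ZMod (p ^ m₀)) v.1.2) :=
          congrArg Subtype.val hEb1
        rw [TowerAux.tgt_eq] at hEb2
        have htb : X.tgt b = v.1.1 := congrArg Prod.fst hEb2
        have hh' : h' + (PadicInt.toZModPow m₀) (α.fn b) =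
            ZMod.castHom (pow_dvd_pow p hm) (ZMod (p ^ m₀)) v.1.2 :=
          congrArg Prod.snd hEb2
        have htgtv : (Xlevel p X α m).tgt
            ((b, v.1.2 - (PadicInt.toZModPow m) (α.fn b))) = v.1 := by
          rw [TowerAux.tgt_eq, sub_add_cancel]
          exact Prod.ext htb rfl
        have htgtS : (Xlevel p X α m).tgt
            ((b, v.1.2 - (PadicInt.toZModPow m) (α.fn b))) ∈
            (Xlevel p X α m).toDigraph'.ComponentSet
              ((z.1, TowerAux.secZ (m := m) z.2)) := by
          rw [htgtv]; exact v.2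
        have hsrcS : ((X.src b, v.1.2 - (PadicInt.toZModPow m) (α.fn b)) :
            (Xlevel p X α m).V) ∈
            (Xlevel p X α m).toDigraph'.ComponentSet
              ((z.1, TowerAux.secZ (m := m) z.2)) :=
          Relation.EqvGen.trans _ _ _ v.2 (.symm _ _
            (.rel _ _ ⟨(b, v.1.2 - (PadicInt.toZModPow m) (α.fn b)), rfl, htgtv⟩))
        refine ⟨⟨(b, v.1.2 - (PadicInt.toZModPow m) (α.fn b)), hsrcS, htgtS⟩,
          Subtype.ext htgtv, Subtype.ext (Prod.ext rfl ?_)⟩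
        show ZMod.castHom (pow_dvd_pow p hm) (ZMod (p ^ m₀))
          (v.1.2 - (PadicInt.toZModPow m) (α.fn b)) = h'
        rw [map_sub, TowerAux.c_beta p hm]
        exact (eq_sub_of_add_eq hh').symm
  -- the sheet number
  have hsheet : IsSheeted (TowerAux.indHom p X α hm _ _ hproj).toDigraphHom
      (p ^ (m - m₀)) := by
    rintro ⟨⟨y, hbar⟩, hmem⟩
    obtain ⟨g₁, hcg₁, hg₁⟩ := hsurjV y hbar hmem
    refine Eq.trans (Nat.card_congr ?_) (TowerAux.card_ker hm)
    refine
      { toFun := fun yv => ⟨yv.1.1.2 - g₁, ?_⟩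
        invFun := fun t => ⟨⟨(y, g₁ + t.1), ?_⟩, ?_⟩
        left_inv := ?_
        right_inv := ?_ }
    case _ yv =>
      have h1 : ZMod.castHom (pow_dvd_pow p hm) (ZMod (p ^ m₀)) yv.1.1.2 = hbar :=
        congrArg (fun q : ((Xlevel p X α m₀).component z).V => q.1.2) yv.2
      rw [map_sub, h1, hcg₁, sub_self]
    case _ t =>
      exact Relation.EqvGen.trans _ _ _ hg₁ (key1 t.1 t.2 y g₁)
    case _ t =>
      refine Subtype.ext (Prod.ext rfl ?_)
      show ZMod.castHom (pow_dvd_pow p hm) (ZMod (p ^ m₀)) (g₁ + t.1) = hbar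
      rw [map_add, hcg₁, t.2, add_zero]
    case _ =>
      intro yv
      have h1 : yv.1.1.1 = y :=
        congrArg (fun q : ((Xlevel p X α m₀).component z).V => q.1.1) yv.2
      refine Subtype.ext (Subtype.ext (Prod.ext h1.symm ?_))
      show g₁ + (yv.1.1.2 - g₁) = yv.1.1.2
      ring
    case _ =>
      intro t
      refine Subtype.ext ?_
      show g₁ + t.1 - g₁ = t.1
      ring
  -- the deck group
  have hSker : ∀ t : ZMod (p ^ m),
      ZMod.castHom (pow_dvd_pow p hm) (ZMod (p ^ m₀)) t = 0 →
      ∀ v ∈ (Xlevel p X α m).toDigraph'.ComponentSet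
          ((z.1, TowerAux.secZ (m := m) z.2)),
        ((v.1, v.2 + t) : (Xlevel p X α m).V) ∈
          (Xlevel p X α m).toDigraph'.ComponentSet
            ((z.1, TowerAux.secZ (m := m) z.2)) :=
    fun t ht v hv => Relation.EqvGen.trans _ _ _ hv (key1 t ht v.1 v.2)
  have hkerneg : ∀ t : ZMod (p ^ m),
      ZMod.castHom (pow_dvd_pow p hm) (ZMod (p ^ m₀)) t = 0 →
      ZMod.castHom (pow_dvd_pow p hm) (ZMod (p ^ m₀)) (-t) = 0 :=
    fun t ht => by rw [map_neg, ht, neg_zero]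
  let Φ : Multiplicative (ZMod (p ^ (m - m₀))) →*
      ↥(SerreDeckGroup (TowerAux.indHom p X α hm _ _ hproj)) :=
    MonoidHom.mk' (fun a =>
      ⟨TowerAux.deckPair p X α _ (TowerAux.nuHom hm (Multiplicative.toAdd a))
        (hSker _ (TowerAux.c_nu hm _))
        (hSker _ (hkerneg _ (TowerAux.c_nu hm _))),
        TowerAux.deckPair_mem p X α hm _ _ hproj _ (TowerAux.c_nu hm _) _ _⟩)
      (by
        intro a b
        apply Subtype.ext
        refine Prod.ext (Equiv.ext fun v => ?_) (Equiv.ext fun e => ?_)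
        · refine Subtype.ext (Prod.ext rfl ?_)
          show v.1.2 + TowerAux.nuHom hm (Multiplicative.toAdd (a * b)) =
            v.1.2 + TowerAux.nuHom hm (Multiplicative.toAdd b) +
              TowerAux.nuHom hm (Multiplicative.toAdd a)
          rw [toAdd_mul, map_add]
          ring
        · refine Subtype.ext (Prod.ext rfl ?_)
          show e.1.2 + TowerAux.nuHom hm (Multiplicative.toAdd (a * b)) =
            e.1.2 + TowerAux.nuHom hm (Multiplicative.toAdd b) +
              TowerAux.nuHom hm (Multiplicative.toAdd a)
          rw [toAdd_mul, map_add]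
          ring)
  have hΦinj : Function.Injective Φ := by
    rw [injective_iff_map_eq_one]
    intro a ha
    have h2 : TowerAux.secZ (m := m) z.2 +
        TowerAux.nuHom hm (Multiplicative.toAdd a) = TowerAux.secZ (m := m) z.2 :=
      congrArg (fun σ : ↥(SerreDeckGroup (TowerAux.indHom p X α hm _ _ hproj)) =>
        (σ.1.1 ⟨(z.1, TowerAux.secZ (m := m) z.2), Relation.EqvGen.refl _⟩).1.2) ha
    have h3 : TowerAux.nuHom hm (Multiplicative.toAdd a) = 0 :=
      add_left_cancel (by rw [add_zero]; exact h2)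
    have h4 : Multiplicative.toAdd a = 0 :=
      TowerAux.nu_inj hm (h3.trans (map_zero _).symm)
    rw [← ofAdd_toAdd a, h4, ofAdd_zero]
  have hΦsurj : Function.Surjective Φ := by
    rintro ⟨σ, hσmem⟩
    obtain ⟨hs1, ht1, hi1, hf1, he1⟩ := hσmem
    have h1 := hf1 ⟨(z.1, TowerAux.secZ (m := m) z.2), Relation.EqvGen.refl _⟩
    have h2 := congrArg Subtype.val h1
    have hy : (σ.1 ⟨(z.1, TowerAux.secZ (m := m) z.2),
        Relation.EqvGen.refl _⟩).1.1 = z.1 := congrArg Prod.fst h2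
    have hg : ZMod.castHom (pow_dvd_pow p hm) (ZMod (p ^ m₀))
        ((σ.1 ⟨(z.1, TowerAux.secZ (m := m) z.2),
          Relation.EqvGen.refl _⟩).1.2) =
        ZMod.castHom (pow_dvd_pow p hm) (ZMod (p ^ m₀))
          (TowerAux.secZ (m := m) z.2) := congrArg Prod.snd h2
    have hker2 : ZMod.castHom (pow_dvd_pow p hm) (ZMod (p ^ m₀))
        ((σ.1 ⟨(z.1, TowerAux.secZ (m := m) z.2),
          Relation.EqvGen.refl _⟩).1.2 - TowerAux.secZ (m := m) z.2) = 0 := by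
      rw [map_sub, hg, sub_self]
    obtain ⟨a, ha⟩ := TowerAux.nu_surj hm _ hker2
    refine ⟨Multiplicative.ofAdd a, ?_⟩
    apply Subtype.ext
    refine TowerAux.deck_rigid (TowerAux.indHom p X α hm _ _ hproj) hcov
      (TowerAux.inducedClosed_connected (Xlevel p X α m) _)
      (Φ (Multiplicative.ofAdd a)).2 ⟨hs1, ht1, hi1, hf1, he1⟩
      ⟨(z.1, TowerAux.secZ (m := m) z.2), Relation.EqvGen.refl _⟩ ?_
    refine Subtype.ext (Prod.ext hy.symm ?_)
    show TowerAux.secZ (m := m) z.2 +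
      TowerAux.nuHom hm (Multiplicative.toAdd (Multiplicative.ofAdd a)) = _
    rw [toAdd_ofAdd, ha]
    ring
  have hdcard : Nat.card
      ↥(SerreDeckGroup (TowerAux.indHom p X α hm _ _ hproj)) = p ^ (m - m₀) := by
    have e1 := Nat.card_congr (MulEquiv.ofBijective Φ ⟨hΦinj, hΦsurj⟩).toEquiv
    rw [← e1, Nat.card_congr Multiplicative.toAdd, Nat.card_zmod]
  have hiso : Nonempty
      (↥(SerreDeckGroup (TowerAux.indHom p X α hm _ _ hproj)) ≃*
        Multiplicative (ZMod (p ^ (m - m₀)))) :=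
    ⟨(MulEquiv.ofBijective Φ ⟨hΦinj, hΦsurj⟩).symm⟩
  -- assembling
  refine ⟨(Xlevel p X α m).toDigraph'.ComponentSet
      ((z.1, TowerAux.secZ (m := m) z.2)),
    ⟨⟨_, rfl⟩, by rintro v' ⟨v, hv, rfl⟩; exact hproj v hv,
      ⟨TowerAux.indHom p X α hm _ _ hproj, fun w => rfl, fun e => rfl,
        hcov, hsheet, hdcard, hiso⟩⟩, ?_⟩
  -- uniqueness
  rintro S' ⟨⟨w', rfl⟩, himg', -⟩
  have h1 : (levelProj p X α hm).onV w' ∈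
      (Xlevel p X α m₀).toDigraph'.ComponentSet z :=
    himg' ⟨w', Relation.EqvGen.refl _, rfl⟩
  obtain ⟨g, hcg, hg⟩ := hsurjV w'.1
    (ZMod.castHom (pow_dvd_pow p hm) (ZMod (p ^ m₀)) w'.2) h1
  have hker3 : ZMod.castHom (pow_dvd_pow p hm) (ZMod (p ^ m₀)) (w'.2 - g) = 0 := by
    rw [map_sub, hcg, sub_self]
  have h3 := key1 _ hker3 w'.1 g
  have h5 : g + (w'.2 - g) = w'.2 := by ring
  rw [h5] at h3
  have h4 : (Xlevel p X α m).toDigraph'.Reach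
      ((z.1, TowerAux.secZ (m := m) z.2)) w' := Relation.EqvGen.trans _ _ _ hg h3
  exact Set.ext fun u =>
    ⟨fun hu => Relation.EqvGen.trans _ _ _ h4 hu,
      fun hu => Relation.EqvGen.trans _ _ _ (Relation.EqvGen.symm _ _ h4) hu⟩
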